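/- In the College Admissions problem with lower quotas, a pair (x, o) where x_{ij} ∈ {0,1} indicates matches and o_j ∈ {0,1} indicates open colleges corresponds to a stable matching if and only if: (i) each applicant is matched to at most one college; (ii) o_j·l_j ≤ ∑_i x_{ij} ≤ o_j·u_j for each college; (iii) (∑_{k: r_{ik} ≤ r_{ij}} x_{ik})·u_j + ∑_{h: s_{hj} > s_{ij}} x_{hj} ≥ o_j·u_j for each application (a_i,c_j); and (iv) ∑_{i applying to c_j} [1 − ∑_{k: r_{ik} < r_{ij}} x_{ik}] ≤ (1−o_j)·(l_j −1) + o_j·n for each college c_j. -/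

import Mathlib

open Finset
open scoped Classical

open Finset

/-- Feasibility of a (0/1-encoded) matching `x` for a College Admissions
instance with application set `E` and upper quotas `u`: each variable is
binary, only actual applications can be matched, each applicant is assigned
to at most one college, and no college exceeds its quota. -/
def Feasible {n m : ℕ} (E : Finset (Fin n × Fin m)) (u : Fin m → ℕ)
    (x : Fin n → Fin m → ℕ) : Prop :=
  (∀ i j, x i j ≤ 1) ∧ (∀ i j, x i j = 1 → (i, j) ∈ E) ∧
  (∀ i : Fin n, ∑ j, x i j ≤ 1) ∧ (∀ j : Fin m, ∑ i, x i j ≤ u j)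

/-- Classical stability: there is no application `(i, j)` such that `i` is
unmatched or prefers `j` to her assigned college (rank `r`, lower is better),
while `j` has an unfilled place or admits an applicant with a lower score. -/
def Stable {n m : ℕ} (E : Finset (Fin n × Fin m)) (r s : Fin n → Fin m → ℕ)
    (u : Fin m → ℕ) (x : Fin n → Fin m → ℕ) : Prop :=
  ¬ ∃ i j, (i, j) ∈ E ∧
    (∀ k, x i k = 1 → r i j < r i k) ∧
    ((∑ h, x h j) < u j ∨ ∃ h, x h j = 1 ∧ s h j < s i j)


/-- Stability for the College Admissions problem with lower quotas `l` and
upper quotas `u`, with `o j = 1` iff college `j` is open: the matching is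
feasible (closed colleges empty, open colleges between their quotas), no
application blocks with an open college in the classical sense, and no
closed college has at least `l j` applicants who are unmatched or prefer it
to their assignment. -/
noncomputable def LQStable {n m : ℕ} (E : Finset (Fin n × Fin m))
    (r s : Fin n → Fin m → ℕ) (l u : Fin m → ℕ)
    (x : Fin n → Fin m → ℕ) (o : Fin m → ℕ) : Prop :=
  (∀ i j, x i j ≤ 1) ∧ (∀ j, o j ≤ 1) ∧ (∀ i j, x i j = 1 → (i, j) ∈ E) ∧
  (∀ i : Fin n, ∑ j, x i j ≤ 1) ∧
  (∀ j, o j = 1 → l j ≤ ∑ i, x i j ∧ ∑ i, x i j ≤ u j) ∧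
  (∀ j, o j = 0 → ∑ i, x i j = 0) ∧
  (¬ ∃ i j, (i, j) ∈ E ∧ o j = 1 ∧
    (∀ k, x i k = 1 → r i j < r i k) ∧
    ((∑ h, x h j) < u j ∨ ∃ h, x h j = 1 ∧ s h j < s i j)) ∧
  (∀ j, o j = 0 →
    (Finset.univ.filter fun i =>
      (i, j) ∈ E ∧ ∀ k, x i k = 1 → r i j < r i k).card < l j)


section Aux
open Finset
variable {n m : ℕ}

lemma sum_filter_eq_zero_iff' (x : Fin n → Fin m → ℕ) (hxbin : ∀ i j, x i j ≤ 1)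
    (i : Fin n) (p : Fin m → Prop) [DecidablePred p] :
    (∑ k ∈ univ.filter p, x i k) = 0 ↔ ∀ k, x i k = 1 → ¬ p k := by
  rw [Finset.sum_eq_zero_iff]
  constructor
  · intro h k hk hp
    have := h k (by simp [hp])
    omega
  · intro h k hk
    simp only [Finset.mem_filter, Finset.mem_univ, true_and] at hk
    have hb := hxbin i k
    rcases Nat.le_one_iff_eq_zero_or_eq_one.mp hb with h0 | h1
    · exact h0
    · exact absurd hk (h k h1)

end Aux

/-- A pair `(x, o)` of binary variables corresponds to a
stable matching of the College Admissions problem with lower quotas iff it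
satisfies the IP constraints (1), (14), (15) and (16) of Biró–McBride. -/
theorem LQStable_iff_IP {n m : ℕ} (E : Finset (Fin n × Fin m))
    (r s : Fin n → Fin m → ℕ) (l u : Fin m → ℕ)
    (hl : ∀ j, 1 ≤ l j)
    (hrstrict : ∀ i j k, (i, j) ∈ E → (i, k) ∈ E → r i j = r i k → j = k)
    (hsstrict : ∀ j i i', (i, j) ∈ E → (i', j) ∈ E → s i j = s i' j → i = i')
    (x : Fin n → Fin m → ℕ) (o : Fin m → ℕ)
    (hxbin : ∀ i j, x i j ≤ 1) (hobin : ∀ j, o j ≤ 1)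
    (hxE : ∀ i j, x i j = 1 → (i, j) ∈ E) :
    LQStable E r s l u x o ↔
      ((∀ i : Fin n, ∑ j, x i j ≤ 1) ∧
        (∀ j, o j * l j ≤ ∑ i, x i j ∧ ∑ i, x i j ≤ o j * u j) ∧
        (∀ i j, (i, j) ∈ E →
          o j * u j ≤ (∑ k ∈ univ.filter fun k => r i k ≤ r i j, x i k) * u j +
            ∑ h ∈ univ.filter fun h => (h, j) ∈ E ∧ s i j < s h j, x h j) ∧
        (∀ j, (∑ i ∈ univ.filter fun i => (i, j) ∈ E,
            (1 - ∑ k ∈ univ.filter fun k => r i k < r i j, x i k)) ≤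
          (1 - o j) * (l j - 1) + o j * n)) := by

  classical
  have hx01 : ∀ i j, x i j = 0 ∨ x i j = 1 := fun i j =>
    Nat.le_one_iff_eq_zero_or_eq_one.mp (hxbin i j)
  have ho01 : ∀ j, o j = 0 ∨ o j = 1 := fun j =>
    Nat.le_one_iff_eq_zero_or_eq_one.mp (hobin j)
  -- characterization of the "prefers strictly" sums
  have hS0 : ∀ i j, (∑ k ∈ univ.filter fun k => r i k ≤ r i j, x i k) = 0 ↔
      (∀ k, x i k = 1 → r i j < r i k) := by
    intro i j
    rw [sum_filter_eq_zero_iff' x hxbin]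
    simp [Nat.not_le]
  have hP0 : ∀ i j, (∑ k ∈ univ.filter fun k => r i k < r i j, x i k) = 0 ↔
      (∀ k, x i k = 1 → r i j ≤ r i k) := by
    intro i j
    rw [sum_filter_eq_zero_iff' x hxbin]
    simp [Nat.not_lt]
  have hfle : ∀ (i : Fin n) (p : Fin m → Prop) [DecidablePred p],
      (∀ i : Fin n, ∑ j, x i j ≤ 1) →
      (∑ k ∈ univ.filter p, x i k) ≤ 1 := by
    intro i p _ hrow
    exact le_trans (Finset.sum_le_sum_of_subset (Finset.filter_subset _ _)) (hrow i)
  -- the LHS of (16) counts the weak candidates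
  have hB4LHS : ∀ j : Fin m, (∀ i : Fin n, ∑ j, x i j ≤ 1) →
      (∑ i ∈ univ.filter fun i => (i, j) ∈ E,
        (1 - ∑ k ∈ univ.filter fun k => r i k < r i j, x i k)) =
      (univ.filter fun i => (i, j) ∈ E ∧
        (∑ k ∈ univ.filter fun k => r i k < r i j, x i k) = 0).card := by
    intro j hrow
    rw [← Finset.filter_filter, Finset.card_filter]
    apply Finset.sum_congr rfl
    intro i _
    have h1 := hfle i (fun k => r i k < r i j) hrow
    split_ifs with h
    · omega
    · omega
  -- when nobody is matched to j, weak candidates = strict candidates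
  have hsets : ∀ j : Fin m, (∀ i, x i j = 0) →
      (univ.filter fun i => (i, j) ∈ E ∧
        (∑ k ∈ univ.filter fun k => r i k < r i j, x i k) = 0) =
      (univ.filter fun i => (i, j) ∈ E ∧ ∀ k, x i k = 1 → r i j < r i k) := by
    intro j hz
    apply Finset.filter_congr
    intro i _
    simp only [hP0 i j, eq_iff_iff]
    constructor
    · rintro ⟨hE, hw⟩
      refine ⟨hE, fun k hk => ?_⟩
      have hle := hw k hk
      rcases Nat.lt_or_ge (r i j) (r i k) with h | h
      · exact h
      · have heq : r i j = r i k := le_antisymm hle h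
        have hk' : k = j := hrstrict i k j (hxE i k hk) hE heq.symm
        rw [hk'] at hk
        rw [hz i] at hk
        omega
    · rintro ⟨hE, hs'⟩
      exact ⟨hE, fun k hk => le_of_lt (hs' k hk)⟩
  constructor
  · rintro ⟨-, -, -, h4, h5, h6, h7, h8⟩
    refine ⟨h4, ?_, ?_, ?_⟩
    · intro j
      rcases ho01 j with h | h
      · have := h6 j h
        simp [h, this]
      · have := h5 j h
        simp [h, this.1, this.2]
    · intro i j hij
      rcases ho01 j with h | h
      · simp [h]
      · rw [h, one_mul]
        by_cases hS : (∑ k ∈ univ.filter fun k => r i k ≤ r i j, x i k) = 0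
        · -- applicant prefers j to her assignment; stability forces j full with better students
          have hcand := (hS0 i j).mp hS
          have hnb : ¬ ((∑ h, x h j) < u j ∨ ∃ h, x h j = 1 ∧ s h j < s i j) := by
            intro hb
            exact h7 ⟨i, j, hij, h, hcand, hb⟩
          push_neg at hnb
          obtain ⟨hfull', hnoworse⟩ := hnb
          have hfull : (∑ h, x h j) = u j := le_antisymm (h5 j h).2 hfull'
          -- the filtered sum equals the full sum
          have hcompl : (∑ h ∈ univ.filter fun h => ¬((h, j) ∈ E ∧ s i j < s h j), x h j) = 0 := by
            rw [Finset.sum_eq_zero_iff]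
            intro h' hh'
            simp only [Finset.mem_filter, Finset.mem_univ, true_and] at hh'
            rcases hx01 h' j with h0 | h1
            · exact h0
            · exfalso
              apply hh'
              refine ⟨hxE h' j h1, ?_⟩
              have hne : s h' j ≠ s i j := by
                intro heq
                have : h' = i := hsstrict j h' i (hxE h' j h1) hij heq
                rw [this] at h1
                have := hcand j h1
                omega
              have := hnoworse h' h1
              omega
          have hsplit := Finset.sum_filter_add_sum_filter_not univ
            (fun h => (h, j) ∈ E ∧ s i j < s h j) (fun h => x h j)
          rw [hS, zero_mul, zero_add]
          omega
        · have hS1 : (∑ k ∈ univ.filter fun k => r i k ≤ r i j, x i k) = 1 := by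
            have := hfle i (fun k => r i k ≤ r i j) h4
            omega
          rw [hS1, one_mul]
          exact Nat.le_add_right _ _
    · intro j
      rw [hB4LHS j h4]
      rcases ho01 j with h | h
      · have hz : ∀ i, x i j = 0 := by
          have := h6 j h
          intro i
          exact (Finset.sum_eq_zero_iff.mp this) i (Finset.mem_univ i)
        rw [hsets j hz]
        have := h8 j h
        have := hl j
        simp only [h]
        omega
      · have hcard : (univ.filter fun i => (i, j) ∈ E ∧
            (∑ k ∈ univ.filter fun k => r i k < r i j, x i k) = 0).card ≤ n := by
          calc _ ≤ (univ : Finset (Fin n)).card := Finset.card_filter_le _ _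
          _ = n := by simp
        simp only [h]
        omega
  · rintro ⟨h1, h2, h3, h4⟩
    have hA6 : ∀ j, o j = 0 → (∑ i, x i j) = 0 := by
      intro j hj
      have := (h2 j).2
      rw [hj, zero_mul] at this
      omega
    refine ⟨hxbin, hobin, hxE, h1, ?_, hA6, ?_, ?_⟩
    · intro j hj
      have := h2 j
      rw [hj, one_mul, one_mul] at this
      exact this
    · rintro ⟨i, j, hij, hoj, hcand, hblock⟩
      have hS : (∑ k ∈ univ.filter fun k => r i k ≤ r i j, x i k) = 0 :=
        (hS0 i j).mpr hcand
      have h3' := h3 i j hij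
      rw [hoj, one_mul, hS, zero_mul, zero_add] at h3'
      have hTle : (∑ h ∈ univ.filter fun h => (h, j) ∈ E ∧ s i j < s h j, x h j) ≤
          ∑ h, x h j :=
        Finset.sum_le_sum_of_subset (Finset.filter_subset _ _)
      have hub : (∑ h, x h j) ≤ u j := by
        have := (h2 j).2
        rw [hoj, one_mul] at this
        exact this
      have hsplit := Finset.sum_filter_add_sum_filter_not univ
        (fun h => (h, j) ∈ E ∧ s i j < s h j) (fun h => x h j)
      have hcompl : (∑ h ∈ univ.filter fun h => ¬((h, j) ∈ E ∧ s i j < s h j), x h j) = 0 := by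
        omega
      rcases hblock with hlt | ⟨h', hh1, hh2⟩
      · omega
      · have hmem : h' ∈ univ.filter fun h => ¬((h, j) ∈ E ∧ s i j < s h j) := by
          simp only [Finset.mem_filter, Finset.mem_univ, true_and]
          rintro ⟨-, hs'⟩
          omega
        have := (Finset.sum_eq_zero_iff.mp hcompl) h' hmem
        omega
    · intro j hj
      have hz : ∀ i, x i j = 0 := by
        have := hA6 j
        intro i
        exact (Finset.sum_eq_zero_iff.mp (this hj)) i (Finset.mem_univ i)
      have h4' := h4 j
      rw [hB4LHS j h1, hsets j hz] at h4'
      rw [hj] at h4'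
      have := hl j
      omega
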